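/- arXiv:1308.1122 — 2 statements merged into one kernel-verified Lean document; each statement's English description precedes it below -/
import Mathlib

section
/- If x, y ∈ ℝⁿ with x majorized by y and f : ℝ → ℝ is convex, then Σᵢ f(xᵢ) ≤ Σᵢ f(yᵢ) (Karamata's inequality). -/
open Finset

/-- The sum of the `k` largest entries of the vector `v`, i.e. the maximum of
`∑ i ∈ s, v i` over all subsets `s` of cardinality `k`. -/
noncomputable def ksum {n : ℕ} (v : Fin n → ℝ) (k : ℕ) : ℝ :=
  sSup {t : ℝ | ∃ s : Finset (Fin n), s.card = k ∧ t = ∑ i ∈ s, v i}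

noncomputable def kSubg (f : ℝ → ℝ) (a : ℝ) : ℝ :=
  sSup ((fun b => (f a - f b) / (a - b)) '' Set.Iio a)

lemma kSubg_set_nonempty (f : ℝ → ℝ) (a : ℝ) :
    ((fun b => (f a - f b) / (a - b)) '' Set.Iio a).Nonempty :=
  ⟨_, ⟨a - 1, by simp, rfl⟩⟩

lemma kSubg_set_bdd {f : ℝ → ℝ} (hf : ConvexOn ℝ Set.univ f) (a : ℝ) :
    BddAbove ((fun b => (f a - f b) / (a - b)) '' Set.Iio a) := by
  refine ⟨(f (a + 1) - f a) / (a + 1 - a), ?_⟩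
  rintro t ⟨b, hb, rfl⟩
  exact hf.slope_mono_adjacent (Set.mem_univ b) (Set.mem_univ (a + 1)) hb (by linarith)

lemma kSubg_le_slope {f : ℝ → ℝ} (hf : ConvexOn ℝ Set.univ f) {a p : ℝ} (hap : a < p) :
    kSubg f a ≤ (f p - f a) / (p - a) := by
  refine csSup_le (kSubg_set_nonempty f a) ?_
  rintro t ⟨b, hb, rfl⟩
  exact hf.slope_mono_adjacent (Set.mem_univ b) (Set.mem_univ p) hb hap

lemma slope_le_kSubg {f : ℝ → ℝ} (hf : ConvexOn ℝ Set.univ f) {a b : ℝ} (hb : b < a) :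
    (f a - f b) / (a - b) ≤ kSubg f a :=
  le_csSup (kSubg_set_bdd hf a) ⟨b, hb, rfl⟩

lemma kSubg_mono {f : ℝ → ℝ} (hf : ConvexOn ℝ Set.univ f) : Monotone (kSubg f) := by
  intro a a' h
  rcases eq_or_lt_of_le h with rfl | h
  · exact le_rfl
  · calc kSubg f a ≤ (f a' - f a) / (a' - a) := kSubg_le_slope hf h
      _ ≤ kSubg f a' := slope_le_kSubg hf h

lemma kSubg_spec {f : ℝ → ℝ} (hf : ConvexOn ℝ Set.univ f) (a p : ℝ) :
    kSubg f a * (p - a) ≤ f p - f a := by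
  rcases lt_trichotomy p a with h | rfl | h
  · have h1 : (f a - f p) / (a - p) ≤ kSubg f a := slope_le_kSubg hf h
    have h2 : (0:ℝ) < a - p := by linarith
    rw [div_le_iff₀ h2] at h1
    nlinarith
  · simp
  · have h1 : kSubg f a ≤ (f p - f a) / (p - a) := kSubg_le_slope hf h
    have h2 : (0:ℝ) < p - a := by linarith
    rw [le_div_iff₀ h2] at h1
    linarith

lemma strictMono_fin_le {k : ℕ} {g : Fin k → ℕ} (hg : StrictMono g) :
    ∀ m (i : Fin k), (i : ℕ) = m → m ≤ g i := by
  intro m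
  induction m with
  | zero => intro i _; exact Nat.zero_le _
  | succ m ih =>
    intro i hi
    have hm : m < k := by omega
    have h1 : m ≤ g ⟨m, hm⟩ := ih _ rfl
    have h2 : g ⟨m, hm⟩ < g i := hg (by simp [Fin.lt_def]; omega)
    omega

lemma sum_le_prefix {n : ℕ} {v : Fin n → ℝ}
    (hv : ∀ i j : Fin n, i ≤ j → v j ≤ v i)
    {k : ℕ} (hk : k ≤ n) (s : Finset (Fin n)) (hs : s.card = k) :
    ∑ i ∈ s, v i ≤ ∑ i : Fin k, v (Fin.castLE hk i) := by
  have e := s.orderIsoOfFin hs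
  have hsum : ∑ i ∈ s, v i = ∑ j : Fin k, v (e j) := by
    rw [← Finset.sum_coe_sort s v]
    exact (Equiv.sum_comp e.toEquiv (fun i : s => v i)).symm
  rw [hsum]
  apply Finset.sum_le_sum
  intro j _
  apply hv
  rw [Fin.le_def]
  exact strictMono_fin_le
    (g := fun j : Fin k => ((e j : Fin n) : ℕ))
    (fun a b hab => by exact_mod_cast e.strictMono hab) _ j rfl

lemma prefix_mem {n : ℕ} (v : Fin n → ℝ) {k : ℕ} (hk : k ≤ n) :
    ∃ s : Finset (Fin n), s.card = k ∧
      (∑ i : Fin k, v (Fin.castLE hk i)) = ∑ i ∈ s, v i := by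
  refine ⟨Finset.map (Fin.castLEEmb hk) Finset.univ, by simp, ?_⟩
  rw [Finset.sum_map]
  rfl

lemma ksum_antitone {n : ℕ} {v : Fin n → ℝ}
    (hv : ∀ i j : Fin n, i ≤ j → v j ≤ v i) {k : ℕ} (hk : k ≤ n) :
    ksum v k = ∑ i : Fin k, v (Fin.castLE hk i) := by
  apply IsGreatest.csSup_eq
  constructor
  · obtain ⟨s, hs, h⟩ := prefix_mem v hk
    exact ⟨s, hs, h⟩
  · rintro t ⟨s, hs, rfl⟩
    exact sum_le_prefix hv hk s hs

lemma ksum_perm {n : ℕ} (v : Fin n → ℝ) (σ : Equiv.Perm (Fin n)) (k : ℕ) :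
    ksum (v ∘ σ) k = ksum v k := by
  unfold ksum
  congr 1
  ext t
  constructor
  · rintro ⟨s, hs, rfl⟩
    refine ⟨s.map σ.toEmbedding, by simp [hs], ?_⟩
    rw [Finset.sum_map]
    rfl
  · rintro ⟨s, hs, rfl⟩
    refine ⟨s.map σ.symm.toEmbedding, by simp [hs], ?_⟩
    rw [Finset.sum_map]
    simp

lemma karamata_core (n : ℕ) (u v c : ℕ → ℝ)
    (hc : ∀ i, i + 1 < n → c (i + 1) ≤ c i)
    (hX : ∀ k, k ≤ n → ∑ i ∈ range k, u i ≤ ∑ i ∈ range k, v i)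
    (hE : ∑ i ∈ range n, u i = ∑ i ∈ range n, v i) :
    0 ≤ ∑ i ∈ range n, c i * (v i - u i) := by
  have hG : ∀ k, k ≤ n → 0 ≤ ∑ i ∈ range k, (v i - u i) := by
    intro k hk
    rw [Finset.sum_sub_distrib]
    linarith [hX k hk]
  have hGn : ∑ i ∈ range n, (v i - u i) = 0 := by
    rw [Finset.sum_sub_distrib]; linarith
  have habel := Finset.sum_range_by_parts c (fun i => v i - u i) n
  simp only [smul_eq_mul] at habel
  rw [habel, hGn, mul_zero, zero_sub, Left.nonneg_neg_iff]
  apply Finset.sum_nonpos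
  intro i hi
  rw [Finset.mem_range] at hi
  have h1 : c (i + 1) ≤ c i := hc i (by omega)
  have h2 : 0 ≤ ∑ j ∈ range (i + 1), (v j - u j) := hG (i + 1) (by omega)
  nlinarith

/-- Karamata's inequality: if `x ≺ y` and `f` is convex then `∑ f(xᵢ) ≤ ∑ f(yᵢ)`. -/
theorem karamata (n : ℕ) (x y : Fin n → ℝ) (f : ℝ → ℝ)
    (hmaj : ∀ k : ℕ, ksum x k ≤ ksum y k)
    (hsum : ∑ i, x i = ∑ i, y i)
    (hf : ConvexOn ℝ Set.univ f) :
    ∑ i, f (x i) ≤ ∑ i, f (y i) := by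
  classical
  set σ : Equiv.Perm (Fin n) := Fin.revPerm.trans (Tuple.sort x) with hσ
  set τ : Equiv.Perm (Fin n) := Fin.revPerm.trans (Tuple.sort y) with hτ
  set u : Fin n → ℝ := x ∘ σ with hu
  set v : Fin n → ℝ := y ∘ τ with hv
  have hu_anti : ∀ i j : Fin n, i ≤ j → u j ≤ u i := by
    intro i j hij
    exact Tuple.monotone_sort x (Fin.rev_le_rev.mpr hij)
  have hv_anti : ∀ i j : Fin n, i ≤ j → v j ≤ v i := by
    intro i j hij
    exact Tuple.monotone_sort y (Fin.rev_le_rev.mpr hij)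
  -- ℕ extensions
  set uN : ℕ → ℝ := fun i => if h : i < n then u ⟨i, h⟩ else 0 with huN
  set vN : ℕ → ℝ := fun i => if h : i < n then v ⟨i, h⟩ else 0 with hvN
  have hpref : ∀ (w : Fin n → ℝ) (wN : ℕ → ℝ),
      (wN = fun i => if h : i < n then w ⟨i, h⟩ else 0) →
      ∀ k (hk : k ≤ n), ∑ i ∈ range k, wN i = ∑ i : Fin k, w (Fin.castLE hk i) := by
    intro w wN hwN k hk
    rw [← Fin.sum_univ_eq_sum_range]
    apply Finset.sum_congr rfl
    intro i _
    have : (i : ℕ) < n := lt_of_lt_of_le i.isLt hk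
    simp [hwN, this]
    rfl
  have hXpref : ∀ k, k ≤ n →
      ∑ i ∈ range k, uN i ≤ ∑ i ∈ range k, vN i := by
    intro k hk
    rw [hpref u uN huN k hk, hpref v vN hvN k hk,
        ← ksum_antitone hu_anti hk, ← ksum_antitone hv_anti hk,
        hu, hv, ksum_perm x σ k, ksum_perm y τ k]
    exact hmaj k
  have hsum_u : ∑ i ∈ range n, uN i = ∑ i, x i := by
    rw [hpref u uN huN n le_rfl]
    have : ∑ i : Fin n, u (Fin.castLE le_rfl i) = ∑ i, u i := by
      apply Finset.sum_congr rfl; intro i _; congr 1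
    rw [this, hu]
    exact Equiv.sum_comp σ x
  have hsum_v : ∑ i ∈ range n, vN i = ∑ i, y i := by
    rw [hpref v vN hvN n le_rfl]
    have : ∑ i : Fin n, v (Fin.castLE le_rfl i) = ∑ i, v i := by
      apply Finset.sum_congr rfl; intro i _; congr 1
    rw [this, hv]
    exact Equiv.sum_comp τ y
  set c : ℕ → ℝ := fun i => kSubg f (uN i) with hc
  have hcore := karamata_core n uN vN c
    (fun i hi => kSubg_mono hf (by
      have h1 : i < n := by omega
      simp only [huN, dif_pos hi, dif_pos h1]
      exact hu_anti ⟨i, h1⟩ ⟨i + 1, hi⟩ (by simp [Fin.le_def])))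
    hXpref (by rw [hsum_u, hsum_v, hsum])
  have hstep : ∑ i ∈ range n, c i * (vN i - uN i)
      ≤ ∑ i ∈ range n, (f (vN i) - f (uN i)) :=
    Finset.sum_le_sum fun i _ => kSubg_spec hf (uN i) (vN i)
  have hfinal : 0 ≤ ∑ i ∈ range n, (f (vN i) - f (uN i)) := le_trans hcore hstep
  rw [Finset.sum_sub_distrib] at hfinal
  have hfu : ∑ i ∈ range n, f (uN i) = ∑ i, f (x i) := by
    rw [← Fin.sum_univ_eq_sum_range (fun i => f (uN i)) n]
    have : ∑ i : Fin n, f (uN i) = ∑ i, f (u i) := by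
      apply Finset.sum_congr rfl
      intro i _
      congr 1
      simp [huN, i.isLt]
    rw [this, hu]
    exact Equiv.sum_comp σ (fun i => f (x i))
  have hfv : ∑ i ∈ range n, f (vN i) = ∑ i, f (y i) := by
    rw [← Fin.sum_univ_eq_sum_range (fun i => f (vN i)) n]
    have : ∑ i : Fin n, f (vN i) = ∑ i, f (v i) := by
      apply Finset.sum_congr rfl
      intro i _
      congr 1
      simp [hvN, i.isLt]
    rw [this, hv]
    exact Equiv.sum_comp τ (fun i => f (y i))
  rw [hfu, hfv] at hfinal
  linarith
end

section
/- Let x₁ ≥ ... ≥ xₙ > 0 and d₁ ≥ ... ≥ dₙ > 0 satisfy x₁···x_k ≥ d₁···d_k for all k < n and x₁···xₙ = d₁···dₙ. Then for every k, the sum of the k largest values among |log xᵢ| is at least the sum of the k largest values among |log dᵢ|. -/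
open Finset

lemma fin_le_apply {p n : ℕ} (f : Fin p → Fin n) (hf : StrictMono f) :
    ∀ j (h : j < p), j ≤ (f ⟨j, h⟩ : ℕ) := by
  intro j
  induction j with
  | zero => intro h; exact Nat.zero_le _
  | succ j ih =>
    intro h
    have h1 : j < p := Nat.lt_of_succ_lt h
    have h2 := hf (show (⟨j, h1⟩ : Fin p) < ⟨j + 1, h⟩ by simp [Fin.lt_def])
    have h3 := ih h1
    rw [Fin.lt_def] at h2
    omega

/-- first-p-indices finset -/
lemma filter_lt_eq_map {n p : ℕ} (hp : p ≤ n) :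
    Finset.univ.filter (fun i : Fin n => (i : ℕ) < p) =
      Finset.univ.map (Fin.castLEEmb hp) := by
  ext i
  simp only [mem_filter, mem_univ, true_and, mem_map, Fin.castLEEmb_apply]
  constructor
  · intro h; exact ⟨⟨i, h⟩, by ext; simp⟩
  · rintro ⟨j, rfl⟩; simpa using j.2

lemma key_sum_le {n : ℕ} (v : Fin n → ℝ) (hdec : ∀ i j : Fin n, i ≤ j → v j ≤ v i)
    (s : Finset (Fin n)) :
    ∑ i ∈ s, v i ≤ ∑ i ∈ Finset.univ.filter (fun i : Fin n => (i : ℕ) < s.card), v i := by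
  have hp : s.card ≤ n := by
    simpa using (Finset.card_le_univ s).trans_eq (by simp)
  set p := s.card with hpdef
  let f := s.orderEmbOfFin rfl
  have hs : s = Finset.univ.map f.toEmbedding := by
    apply (Finset.eq_of_subset_of_card_le _ _).symm
    · intro i hi
      simp only [mem_map, RelEmbedding.coe_toEmbedding] at hi
      obtain ⟨j, -, rfl⟩ := hi
      exact s.orderEmbOfFin_mem rfl j
    · simp
  rw [filter_lt_eq_map hp]
  rw [hs, Finset.sum_map, Finset.sum_map]
  apply Finset.sum_le_sum
  intro i _
  apply hdec
  rw [Fin.le_def]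
  simpa using fin_le_apply f f.strictMono i i.2

lemma map_rev_filter {n q : ℕ} (hq : q ≤ n) :
    (Finset.univ.filter (fun i : Fin n => (i : ℕ) < q)).map ⟨Fin.rev, Fin.rev_injective⟩ =
      Finset.univ.filter (fun i : Fin n => n - q ≤ (i : ℕ)) := by
  ext i
  simp only [mem_map, mem_filter, mem_univ, true_and, Function.Embedding.coeFn_mk]
  constructor
  · rintro ⟨j, hj, rfl⟩
    have := j.2
    simp only [Fin.val_rev]
    omega
  · intro h
    refine ⟨Fin.rev i, ?_, Fin.rev_rev i⟩
    have := i.2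
    simp only [Fin.val_rev]
    omega

lemma key_sum_ge {n : ℕ} (v : Fin n → ℝ) (hdec : ∀ i j : Fin n, i ≤ j → v j ≤ v i)
    (s : Finset (Fin n)) :
    ∑ i ∈ Finset.univ.filter (fun i : Fin n => n - s.card ≤ (i : ℕ)), v i ≤ ∑ i ∈ s, v i := by
  have hq : s.card ≤ n := by
    simpa using (Finset.card_le_univ s).trans_eq (by simp)
  set e : Fin n ↪ Fin n := ⟨Fin.rev, Fin.rev_injective⟩ with he
  have h := key_sum_le (fun i => -v (Fin.rev i))
    (fun i j hij => by
      simp only [neg_le_neg_iff]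
      exact hdec _ _ (Fin.rev_le_rev.2 hij)) (s.map e)
  rw [card_map, Finset.sum_map] at h
  have h1 : ∑ i ∈ (Finset.univ.filter (fun i : Fin n => (i : ℕ) < s.card)).map e,
      (-v ·) i = ∑ j ∈ Finset.univ.filter (fun i : Fin n => (i : ℕ) < s.card),
      (-v ·) (e j) := Finset.sum_map _ _ _
  rw [map_rev_filter hq] at h1
  simp only [he, Function.Embedding.coeFn_mk, Fin.rev_rev] at h h1
  have h2 := h.trans_eq h1.symm
  simp only [Finset.sum_neg_distrib] at h2
  linarith


lemma bddAbove_ksumSet {n k : ℕ} (v : Fin n → ℝ) :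
    BddAbove {t : ℝ | ∃ s : Finset (Fin n), s.card = k ∧ t = ∑ i ∈ s, v i} := by
  apply BddAbove.mono _ (Set.finite_range (fun s : Finset (Fin n) => ∑ i ∈ s, v i)).bddAbove
  rintro t ⟨s, -, rfl⟩
  exact ⟨s, rfl⟩

lemma le_ksum {n k : ℕ} (v : Fin n → ℝ) (s : Finset (Fin n)) (hs : s.card = k) :
    ∑ i ∈ s, v i ≤ ksum v k :=
  le_csSup (bddAbove_ksumSet v) ⟨s, hs, rfl⟩


/-- Under the log-majorization hypotheses, for every `k` the sum of the `k` largest values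
among `|log xᵢ|` is at least the sum of the `k` largest values among `|log dᵢ|`. -/
theorem abs_log_weak_majorization (n : ℕ) (x d : Fin n → ℝ)
    (hxpos : ∀ i, 0 < x i) (hdpos : ∀ i, 0 < d i)
    (hxdec : ∀ i j : Fin n, i ≤ j → x j ≤ x i)
    (hddec : ∀ i j : Fin n, i ≤ j → d j ≤ d i)
    (hprod : ∀ k < n, (∏ i ∈ Finset.univ.filter (fun i : Fin n => (i : ℕ) < k), d i) ≤
        ∏ i ∈ Finset.univ.filter (fun i : Fin n => (i : ℕ) < k), x i)
    (hprodeq : ∏ i, x i = ∏ i, d i) :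
    ∀ k : ℕ, ksum (fun i => |Real.log (d i)|) k ≤ ksum (fun i => |Real.log (x i)|) k := by
  intro k
  by_cases hk : k ≤ n
  case neg =>
    have hempty : ∀ (v : Fin n → ℝ),
        {t : ℝ | ∃ s : Finset (Fin n), s.card = k ∧ t = ∑ i ∈ s, v i} = ∅ := by
      intro v
      ext t
      simp only [Set.mem_setOf_eq, Set.mem_empty_iff_false, iff_false, not_exists]
      rintro s ⟨hs, -⟩
      have := Finset.card_le_univ s
      simp only [card_univ, Fintype.card_fin] at this
      omega
    unfold ksum
    rw [hempty, hempty]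
  case pos =>
    set L : Fin n → ℝ := fun i => Real.log (d i) with hL
    set M : Fin n → ℝ := fun i => Real.log (x i) with hM
    have hLdec : ∀ i j : Fin n, i ≤ j → L j ≤ L i :=
      fun i j h => Real.log_le_log (hdpos j) (hddec i j h)
    have hMdec : ∀ i j : Fin n, i ≤ j → M j ≤ M i :=
      fun i j h => Real.log_le_log (hxpos j) (hxdec i j h)
    have hcardF : ∀ p ≤ n, (Finset.univ.filter (fun i : Fin n => (i : ℕ) < p)).card = p := by
      intro p hp
      rw [filter_lt_eq_map hp]
      simp
    have hcardG : ∀ q ≤ n, (Finset.univ.filter (fun i : Fin n => n - q ≤ (i : ℕ))).card = q := by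
      intro q hq
      rw [← map_rev_filter hq, card_map, hcardF q hq]
    have hAB : ∀ p ≤ n,
        ∑ i ∈ Finset.univ.filter (fun i : Fin n => (i : ℕ) < p), L i ≤
          ∑ i ∈ Finset.univ.filter (fun i : Fin n => (i : ℕ) < p), M i := by
      intro p hp
      rw [hL, hM]
      simp only
      rw [← Real.log_prod (fun i _ => (hdpos i).ne'),
        ← Real.log_prod (fun i _ => (hxpos i).ne')]
      rcases lt_or_eq_of_le hp with h | h
      · exact Real.log_le_log (Finset.prod_pos fun i _ => hdpos i) (hprod p h)
      · have hfe : Finset.univ.filter (fun i : Fin n => (i : ℕ) < p) = Finset.univ := by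
          ext i
          simp only [mem_filter, mem_univ, true_and, iff_true]
          have := i.2
          omega
        rw [hfe, hprodeq]
    have hsumeq : ∑ i, L i = ∑ i, M i := by
      rw [hL, hM]
      simp only
      rw [← Real.log_prod (fun i _ => (hdpos i).ne'),
        ← Real.log_prod (fun i _ => (hxpos i).ne'), hprodeq]
    obtain ⟨s0, -, hs0⟩ : ∃ s ⊆ (Finset.univ : Finset (Fin n)), s.card = k :=
      Finset.exists_subset_card_eq (by simpa using hk)
    refine csSup_le ⟨∑ i ∈ s0, |L i|, s0, hs0, rfl⟩ ?_
    rintro t ⟨s, hsk, rfl⟩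
    set sp := s.filter (fun i => 0 ≤ L i) with hsp
    set sm := s.filter (fun i => ¬ 0 ≤ L i) with hsm
    obtain ⟨p, hpdef⟩ : ∃ m, m = sp.card := ⟨_, rfl⟩
    obtain ⟨q, hqdef⟩ : ∃ m, m = sm.card := ⟨_, rfl⟩
    have hpq : p + q = k := by
      rw [hpdef, hqdef, hsp, hsm, Finset.card_filter_add_card_filter_not, hsk]
    have hqn : q ≤ n := by omega
    have hpn : p ≤ n := by omega
    -- split sum of |L| over s
    have step1 : ∑ i ∈ s, |L i| = ∑ i ∈ sp, L i + ∑ i ∈ sm, -L i := by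
      rw [← Finset.sum_filter_add_sum_filter_not s (fun i => 0 ≤ L i) (fun i => |L i|)]
      congr 1
      · exact Finset.sum_congr rfl fun i hi => abs_of_nonneg (Finset.mem_filter.1 hi).2
      · exact Finset.sum_congr rfl fun i hi =>
          abs_of_neg (lt_of_not_ge (Finset.mem_filter.1 hi).2)
    have step2 : ∑ i ∈ sp, L i ≤
        ∑ i ∈ Finset.univ.filter (fun i : Fin n => (i : ℕ) < p), L i := by
      have := key_sum_le L hLdec sp
      rwa [← hpdef] at this
    have step3 : ∑ i ∈ Finset.univ.filter (fun i : Fin n => n - q ≤ (i : ℕ)), L i ≤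
        ∑ i ∈ sm, L i := by
      have := key_sum_ge L hLdec sm
      rwa [← hqdef] at this
    -- split univ sums
    have hsplit : ∀ (v : Fin n → ℝ), ∑ i, v i =
        ∑ i ∈ Finset.univ.filter (fun i : Fin n => (i : ℕ) < n - q), v i +
          ∑ i ∈ Finset.univ.filter (fun i : Fin n => n - q ≤ (i : ℕ)), v i := by
      intro v
      rw [← Finset.sum_union (by
        simp only [Finset.disjoint_left, mem_filter, mem_univ, true_and]
        intro a h1 h2
        omega)]
      congr 1
      ext i
      simp only [mem_union, mem_filter, mem_univ, true_and]
      rw [true_iff]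
      omega
    have step4 : -∑ i ∈ Finset.univ.filter (fun i : Fin n => n - q ≤ (i : ℕ)), L i ≤
        -∑ i ∈ Finset.univ.filter (fun i : Fin n => n - q ≤ (i : ℕ)), M i := by
      have h1 := hsplit L
      have h2 := hsplit M
      have h3 := hAB (n - q) (by omega)
      linarith [hsumeq]
    -- assemble
    have step5 : ∑ i ∈ s, |L i| ≤
        ∑ i ∈ Finset.univ.filter (fun i : Fin n => (i : ℕ) < p), M i
          - ∑ i ∈ Finset.univ.filter (fun i : Fin n => n - q ≤ (i : ℕ)), M i := by
      have h3 := hAB p hpn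
      have : ∑ i ∈ sm, -L i = -∑ i ∈ sm, L i := by rw [Finset.sum_neg_distrib]
      linarith [step1, step2, step3]
    -- the candidate set
    set u := Finset.univ.filter (fun i : Fin n => (i : ℕ) < p) ∪
      Finset.univ.filter (fun i : Fin n => n - q ≤ (i : ℕ)) with hu
    have hple : p ≤ n - q := by omega
    have hdisj : Disjoint (Finset.univ.filter (fun i : Fin n => (i : ℕ) < p))
        (Finset.univ.filter (fun i : Fin n => n - q ≤ (i : ℕ))) := by
      simp only [Finset.disjoint_left, mem_filter, mem_univ, true_and]
      intro a h1 h2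
      exact ((h1.trans_le hple).not_ge h2).elim
    have hucard : u.card = k := by
      rw [hu, Finset.card_union_of_disjoint hdisj, hcardF p hpn, hcardG q hqn, hpq]
    have step6 : ∑ i ∈ s, |L i| ≤ ∑ i ∈ u, |M i| := by
      rw [hu, Finset.sum_union hdisj]
      have ha : ∑ i ∈ Finset.univ.filter (fun i : Fin n => (i : ℕ) < p), M i ≤
          ∑ i ∈ Finset.univ.filter (fun i : Fin n => (i : ℕ) < p), |M i| :=
        Finset.sum_le_sum fun i _ => le_abs_self _
      have hb : -∑ i ∈ Finset.univ.filter (fun i : Fin n => n - q ≤ (i : ℕ)), M i ≤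
          ∑ i ∈ Finset.univ.filter (fun i : Fin n => n - q ≤ (i : ℕ)), |M i| := by
        rw [← Finset.sum_neg_distrib]
        exact Finset.sum_le_sum fun i _ => neg_le_abs _
      linarith [step5]
    exact step6.trans (le_ksum (fun i => |M i|) u hucard)
end
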